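/- Let b₁, …, b₆, c₁, …, c₆, s₁, …, s₆ be real numbers with b₆ = b₁, b₃ = b₄, s₁ = s₄ = 0, b₁ ≠ 0 and b₄ ≠ 0, and with each cᵢ ∈ (−1, 1). Then Q₁⁺ = Q₄⁺ and Q₁⁻ = Q₄⁻ hold as polynomials in ℂ[x] if and only if c₂ = c₅, c₆b₆ + c₁b₁ = c₃b₃ + c₄b₄, s₆ = s₂, s₃ = s₅, and b₂ = b₅ or b₂ = −b₅. (The first alternative is Dietmaier's family; the second is a second component of the solution set.) -/

import Mathlib

open Polynomial

noncomputable section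

/-- The quad polynomial `Qᵢ⁺`, with 0-based indexing: `Qp b c s i` is `Q_{i+1}⁺` of the
parameters `b₁,…,b₆ = b 0,…,b 5`, etc. (indices mod 6). -/
def Qp (b c s : Fin 6 → ℝ) (i : Fin 6) : Polynomial ℂ :=
  (X + C (((b (i+2) * c (i+2) - b i * c i : ℝ) : ℂ) / 2 - ((s i : ℝ) : ℂ) / 2 * Complex.I))^2
  + C (Complex.I / 2 * ((b i * s (i+1) + b (i+2) * s (i+2) + s (i+1) * b (i+2) * c (i+1)
        + s (i+2) * b i * c (i+1) : ℝ) : ℂ)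
      - ((b i * b (i+2) * c (i+1) - s (i+1) * s (i+2) * c (i+1) : ℝ) : ℂ) / 2
      + (((s (i+1))^2 + (s (i+2))^2 - (b i)^2 + (b (i+1))^2 - (b (i+2))^2
        - (b (i+1))^2 * (c (i+1))^2 : ℝ) : ℂ) / 4)

/-- The quad polynomial `Qᵢ⁻`: obtained from `Qᵢ⁺` by negating all `b j`, all `c j`,
and `s₂, s₄, s₆` (the `s j` with odd 0-based index `j`), keeping `s₁, s₃, s₅`. -/
def Qm (b c s : Fin 6 → ℝ) (i : Fin 6) : Polynomial ℂ :=
  Qp (fun j => -b j) (fun j => -c j) (fun j => if j.val % 2 = 1 then -s j else s j) i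

theorem quad_eq_iff (A E A' E' : ℂ) :
    ((X:ℂ[X]) + C A)^2 + C E = (X + C A')^2 + C E' ↔ A = A' ∧ E = E' := by
  constructor
  · intro h
    have h1 := congrArg (fun p => coeff p 1) h
    have h0 := congrArg (fun p => coeff p 0) h
    simp only [add_sq, coeff_add, coeff_X_pow, coeff_C, coeff_X, coeff_mul_C, coeff_C_mul,
      mul_coeff_one, ← C_pow] at h1 h0
    norm_num at h1 h0
    exact ⟨h1, by rw [h1] at h0; linear_combination h0⟩
  · rintro ⟨rfl, rfl⟩; rfl


set_option linter.unnecessarySeqFocus false in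
set_option maxHeartbeats 1000000 in
/-- Under `b₆ = b₁`, `b₃ = b₄`, `s₁ = s₄ = 0`, `b₁ ≠ 0`, `b₄ ≠ 0` and `cᵢ ∈ (−1, 1)`,
the equalities `Q₁⁺ = Q₄⁺` and `Q₁⁻ = Q₄⁻` hold iff `c₂ = c₅`,
`c₆b₆ + c₁b₁ = c₃b₃ + c₄b₄`, `s₆ = s₂`, `s₃ = s₅` and `b₂ = ±b₅`. -/
theorem quad_equalities_iff_dietmaier_or_second_component (b c s : Fin 6 → ℝ)
    (hb61 : b 5 = b 0) (hb34 : b 2 = b 3)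
    (hs1 : s 0 = 0) (hs4 : s 3 = 0)
    (hb1 : b 0 ≠ 0) (hb4 : b 3 ≠ 0)
    (hc : ∀ i : Fin 6, -1 < c i ∧ c i < 1) :
    (Qp b c s 0 = Qp b c s 3 ∧ Qm b c s 0 = Qm b c s 3) ↔
      (c 1 = c 4 ∧ c 5 * b 5 + c 0 * b 0 = c 2 * b 2 + c 3 * b 3 ∧
        s 5 = s 1 ∧ s 2 = s 4 ∧ (b 1 = b 4 ∨ b 1 = -b 4)) := by
  simp only [Qp, Qm, quad_eq_iff, Complex.ext_iff]
  norm_num [hs1, hs4, hb61, hb34, Complex.ext_iff,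
    show ((1:Fin 6):ℕ) = 1 from rfl, show ((2:Fin 6):ℕ) = 2 from rfl,
    show ((4:Fin 6):ℕ) = 4 from rfl, show ((5:Fin 6):ℕ) = 5 from rfl,
    show (3:Fin 6) + 1 = 4 from rfl, show (3:Fin 6) + 2 = 5 from rfl,
    show ((3:Fin 6):ℕ) = 3 from rfl,
    ← Complex.ofReal_pow, ← Complex.ofReal_mul, Complex.ofReal_re, Complex.ofReal_im]
  obtain ⟨hcm1, hcp1⟩ := hc 1
  obtain ⟨hcm4, hcp4⟩ := hc 4
  constructor
  · rintro ⟨⟨L, Rp, Ip⟩, -, Rm, Im⟩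
    have hc14 : c 1 = c 4 := by
      have h : b 0 * b 3 * (c 1 - c 4) = 0 := by linear_combination Rm - Rp
      rcases mul_eq_zero.mp h with h' | h'
      · rcases mul_eq_zero.mp h' with h'' | h''
        · exact absurd h'' hb1
        · exact absurd h'' hb4
      · linarith
    rw [← hc14] at Ip Im Rp
    have hA : s 1 + c 1 * s 2 - s 5 - c 1 * s 4 = 0 := by
      have h : b 0 * (s 1 + c 1 * s 2 - s 5 - c 1 * s 4) = 0 := by
        linear_combination (Ip + Im) / 2
      rcases mul_eq_zero.mp h with h' | h'
      · exact absurd h' hb1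
      · exact h'
    have hB : s 2 + c 1 * s 1 - s 4 - c 1 * s 5 = 0 := by
      have h : b 3 * (s 2 + c 1 * s 1 - s 4 - c 1 * s 5) = 0 := by
        linear_combination (Ip - Im) / 2
      rcases mul_eq_zero.mp h with h' | h'
      · exact absurd h' hb4
      · exact h'
    have hsum : s 1 + s 2 - s 5 - s 4 = 0 := by
      have h : (1 + c 1) * (s 1 + s 2 - s 5 - s 4) = 0 := by linear_combination hA + hB
      rcases mul_eq_zero.mp h with h' | h' <;> linarith
    have hdiff : s 1 - s 2 - s 5 + s 4 = 0 := by
      have h : (1 - c 1) * (s 1 - s 2 - s 5 + s 4) = 0 := by linear_combination hA - hB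
      rcases mul_eq_zero.mp h with h' | h' <;> linarith
    have hs15 : s 5 = s 1 := by linarith
    have hs24 : s 2 = s 4 := by linarith
    rw [hs15, hs24] at Rp
    have hb14 : b 1 = b 4 ∨ b 1 = -b 4 := by
      have h : (1 - c 1 ^ 2) * ((b 1 - b 4) * (b 1 + b 4)) = 0 := by linear_combination 4 * Rp
      have h1c : 1 - c 1 ^ 2 ≠ 0 := by nlinarith
      rcases mul_eq_zero.mp h with h' | h'
      · exact absurd h' h1c
      · rcases mul_eq_zero.mp h' with h'' | h''
        · left; linarith
        · right; linarith
    exact ⟨hc14, by linarith, hs15, hs24, hb14⟩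
  · rintro ⟨hc14, hsum, hs15, hs24, hb14⟩
    have hb14sq : b 1 ^ 2 = b 4 ^ 2 := by rcases hb14 with h | h <;> rw [h] <;> ring
    refine ⟨⟨by linarith, ?_, ?_⟩, by linarith, ?_, ?_⟩ <;> rw [hc14, hs15, hs24]
    · linear_combination ((1 - c 4 ^ 2) / 4) * hb14sq
    · ring
    · linear_combination ((1 - c 4 ^ 2) / 4) * hb14sq
    · ring
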